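/- Let $f_1, f_2$ be nonzero homogeneous polynomials in disjoint sets of variables such that $f_i^\perp$ is generated in degrees at most $\delta_i$ ($i = 1,2$). Then the apolar ideal of $t = f_1 f_2$ in $\mathrm{Sym}^\bullet(V_1^* \oplus V_2^*)$ is generated by elements of bidegree $(\delta, 0)$ with $\delta \leq \delta_1$ or $(0, \delta)$ with $\delta \leq \delta_2$. -/

import Mathlib

open MvPolynomial

lemma pderiv_comm' {σ : Type*} [DecidableEq σ] (i j : σ) (f : MvPolynomial σ ℂ) :
    pderiv i (pderiv j f) = pderiv j (pderiv i f) := by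
  induction f using MvPolynomial.induction_on with
  | C a => simp
  | add p q hp hq => simp [hp, hq]
  | mul_X p k hp =>
      simp only [pderiv_mul, map_add, hp, pderiv_X, Pi.single_apply]
      split_ifs <;> simp <;> ring

/-- The apolarity action: the algebra homomorphism from the polynomial ring in the
dual variables to endomorphisms of the polynomial ring, sending each dual variable to
the corresponding partial derivative. -/
noncomputable def diffHom (σ : Type*) [DecidableEq σ] :
    MvPolynomial σ ℂ →ₐ[ℂ] Module.End ℂ (MvPolynomial σ ℂ) :=
  letI s : Set (Module.End ℂ (MvPolynomial σ ℂ)) :=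
    Set.range fun i : σ => ((pderiv i : Derivation ℂ _ _) : MvPolynomial σ ℂ →ₗ[ℂ] MvPolynomial σ ℂ)
  letI hcomm : ∀ a ∈ s, ∀ b ∈ s, a * b = b * a := by
    rintro _ ⟨i, rfl⟩ _ ⟨j, rfl⟩
    exact LinearMap.ext fun f => pderiv_comm' i j f
  letI : CommSemiring (Algebra.adjoin ℂ s) := Algebra.adjoinCommSemiringOfComm ℂ hcomm
  (Algebra.adjoin ℂ s).val.comp
    (aeval fun i : σ => (⟨_, Algebra.subset_adjoin ⟨i, rfl⟩⟩ : Algebra.adjoin ℂ s))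

/-- The apolar ideal of a polynomial: the annihilator under the apolarity action. -/
noncomputable def apolarIdeal {σ : Type*} [DecidableEq σ] (f : MvPolynomial σ ℂ) :
    Ideal (MvPolynomial σ ℂ) where
  carrier := {D | diffHom σ D f = 0}
  zero_mem' := by simp
  add_mem' := by
    intro a b ha hb
    simp only [Set.mem_setOf_eq, map_add, LinearMap.add_apply] at *
    rw [ha, hb, add_zero]
  smul_mem' := by
    intro c x hx
    simp only [Set.mem_setOf_eq, smul_eq_mul, map_mul, Module.End.mul_apply] at *
    rw [hx, map_zero]

lemma mem_apolarIdeal_iff {σ : Type*} [DecidableEq σ] (f D : MvPolynomial σ ℂ) :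
    D ∈ apolarIdeal f ↔ diffHom σ D f = 0 := Iff.rfl


lemma diffHom_X {σ : Type*} [DecidableEq σ] (i : σ) (p : MvPolynomial σ ℂ) :
    diffHom σ (X i) p = pderiv i p := by
  simp [diffHom]

lemma diffHom_C {σ : Type*} [DecidableEq σ] (a : ℂ) (p : MvPolynomial σ ℂ) :
    diffHom σ (C a) p = a • p := by
  simp [diffHom]

lemma pderiv_inl_rename_inr {m₁ m₂ : ℕ} (i : Fin m₁) (q : MvPolynomial (Fin m₂) ℂ) :
    pderiv (Sum.inl i : Fin m₁ ⊕ Fin m₂) (rename Sum.inr q) = 0 := by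
  induction q using MvPolynomial.induction_on with
  | C a => simp
  | add p q hp hq => simp [hp, hq]
  | mul_X p j hp => simp [hp]

lemma pderiv_inr_rename_inl {m₁ m₂ : ℕ} (j : Fin m₂) (p : MvPolynomial (Fin m₁) ℂ) :
    pderiv (Sum.inr j : Fin m₁ ⊕ Fin m₂) (rename Sum.inl p) = 0 := by
  induction p using MvPolynomial.induction_on with
  | C a => simp
  | add p q hp hq => simp [hp, hq]
  | mul_X p j hp => simp [hp]

lemma diffHom_mul_apply {σ : Type*} [DecidableEq σ] (a b x : MvPolynomial σ ℂ) :
    diffHom σ (a * b) x = diffHom σ a (diffHom σ b x) := by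
  rw [map_mul]; rfl

lemma diffHom_rename_inl {m₁ m₂ : ℕ} (g p : MvPolynomial (Fin m₁) ℂ)
    (q : MvPolynomial (Fin m₂) ℂ) :
    diffHom (Fin m₁ ⊕ Fin m₂) (rename Sum.inl g) (rename Sum.inl p * rename Sum.inr q) =
      rename Sum.inl (diffHom (Fin m₁) g p) * rename Sum.inr q := by
  induction g using MvPolynomial.induction_on generalizing p with
  | C a => rw [rename_C, diffHom_C, diffHom_C, map_smul, smul_mul_assoc]
  | add s t hs ht => simp only [map_add, LinearMap.add_apply, hs, ht, add_mul]
  | mul_X s i hs =>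
      rw [show (rename Sum.inl : MvPolynomial (Fin m₁) ℂ →ₐ[ℂ] MvPolynomial (Fin m₁ ⊕ Fin m₂) ℂ) (s * X i)
            = rename Sum.inl s * X (Sum.inl i) by simp,
        diffHom_mul_apply, diffHom_X, pderiv_mul, pderiv_inl_rename_inr, mul_zero, add_zero,
        pderiv_rename Sum.inl_injective, hs, diffHom_mul_apply, diffHom_X]

lemma diffHom_rename_inr {m₁ m₂ : ℕ} (h q : MvPolynomial (Fin m₂) ℂ)
    (p : MvPolynomial (Fin m₁) ℂ) :
    diffHom (Fin m₁ ⊕ Fin m₂) (rename Sum.inr h) (rename Sum.inl p * rename Sum.inr q) =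
      rename Sum.inl p * rename Sum.inr (diffHom (Fin m₂) h q) := by
  induction h using MvPolynomial.induction_on generalizing q with
  | C a => rw [rename_C, diffHom_C, diffHom_C, map_smul, mul_smul_comm]
  | add s t hs ht => simp only [map_add, LinearMap.add_apply, hs, ht, mul_add]
  | mul_X s i hs =>
      rw [show (rename Sum.inr : MvPolynomial (Fin m₂) ℂ →ₐ[ℂ] MvPolynomial (Fin m₁ ⊕ Fin m₂) ℂ) (s * X i)
            = rename Sum.inr s * X (Sum.inr i) by simp,
        diffHom_mul_apply, diffHom_X, pderiv_mul, pderiv_inr_rename_inl, zero_mul, zero_add,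
        pderiv_rename Sum.inr_injective, hs, diffHom_mul_apply, diffHom_X]

lemma diffHom_inl_mul_inr {m₁ m₂ : ℕ} (g p : MvPolynomial (Fin m₁) ℂ)
    (h q : MvPolynomial (Fin m₂) ℂ) :
    diffHom (Fin m₁ ⊕ Fin m₂) (rename Sum.inl g * rename Sum.inr h)
        (rename Sum.inl p * rename Sum.inr q) =
      rename Sum.inl (diffHom (Fin m₁) g p) * rename Sum.inr (diffHom (Fin m₂) h q) := by
  rw [diffHom_mul_apply, diffHom_rename_inr, diffHom_rename_inl]

lemma sumAlgEquiv_eq_sumToIter {m₁ m₂ : ℕ} (x : MvPolynomial (Fin m₁ ⊕ Fin m₂) ℂ) :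
    sumAlgEquiv ℂ (Fin m₁) (Fin m₂) x = sumToIter ℂ (Fin m₁) (Fin m₂) x := by
  have h : (sumAlgEquiv ℂ (Fin m₁) (Fin m₂)).toRingEquiv.toRingHom = sumToIter ℂ (Fin m₁) (Fin m₂) := by
    apply MvPolynomial.ringHom_ext
    · intro r
      simp [sumAlgEquiv_C_inl, sumToIter_C]
    · intro i
      cases i <;> simp [sumAlgEquiv_X_inl, sumAlgEquiv_X_inr, sumToIter_Xl, sumToIter_Xr]
  exact RingHom.congr_fun h x

lemma sumToIter_rename_inl {m₁ m₂ : ℕ} (p : MvPolynomial (Fin m₁) ℂ) :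
    sumToIter ℂ (Fin m₁) (Fin m₂) (rename Sum.inl p) = map C p := by
  have := congrArg (fun φ => φ p) (sumAlgEquiv_comp_rename_inl ℂ (Fin m₁) (Fin m₂))
  rw [← sumAlgEquiv_eq_sumToIter]
  exact this

lemma sumToIter_rename_inr {m₁ m₂ : ℕ} (q : MvPolynomial (Fin m₂) ℂ) :
    sumToIter ℂ (Fin m₁) (Fin m₂) (rename Sum.inr q) = C q := by
  have := congrArg (fun φ => φ q) (sumAlgEquiv_comp_rename_inr ℂ (Fin m₁) (Fin m₂))
  rw [← sumAlgEquiv_eq_sumToIter]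
  simpa using this

lemma eq_zero_of_sum_inl_mul_inr {m₁ m₂ n : ℕ} (p : Fin n → MvPolynomial (Fin m₁) ℂ)
    (q : Fin n → MvPolynomial (Fin m₂) ℂ) (hq : LinearIndependent ℂ q)
    (hsum : ∑ j, rename Sum.inl (p j) * rename Sum.inr (q j) = 0) :
    ∀ j, p j = 0 := by
  have h0 : ∑ j, (map C (p j) : MvPolynomial (Fin m₁) (MvPolynomial (Fin m₂) ℂ)) * C (q j) = 0 := by
    have := congrArg (sumToIter ℂ (Fin m₁) (Fin m₂)) hsum
    simpa [sumToIter_rename_inl, sumToIter_rename_inr] using this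
  intro j
  ext a
  have hc := congrArg (coeff a) h0
  simp only [coeff_sum, coeff_zero] at hc
  rw [show (∑ x, coeff a ((map C (p x) : MvPolynomial (Fin m₁) (MvPolynomial (Fin m₂) ℂ)) * C (q x)))
        = ∑ x, coeff a (p x) • q x from
      Finset.sum_congr rfl fun x _ => by rw [mul_comm, coeff_C_mul, coeff_map, smul_eq_C_mul]; ring] at hc
  have := Fintype.linearIndependent_iff.mp hq _ hc j
  simpa using this

lemma decompose_sum (m₁ m₂ : ℕ) (D : MvPolynomial (Fin m₁ ⊕ Fin m₂) ℂ) :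
    D = ∑ a ∈ (sumToIter ℂ (Fin m₁) (Fin m₂) D).support,
        rename Sum.inl (monomial a (1:ℂ)) *
          rename Sum.inr (coeff a (sumToIter ℂ (Fin m₁) (Fin m₂) D)) := by
  apply (sumAlgEquiv ℂ (Fin m₁) (Fin m₂)).injective
  have hE : ∀ x, sumAlgEquiv ℂ (Fin m₁) (Fin m₂) x = sumToIter ℂ (Fin m₁) (Fin m₂) x :=
    fun _ => sumAlgEquiv_eq_sumToIter _
  rw [hE, hE, map_sum]
  rw [Finset.sum_congr rfl fun a _ => by
    rw [map_mul, sumToIter_rename_inl, sumToIter_rename_inr, map_monomial, mul_comm,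
      C_mul_monomial, map_one, mul_one]]
  exact (support_sum_monomial_coeff _).symm

/-- If the apolar ideals of nonzero homogeneous `f₁`, `f₂` (in disjoint sets of variables) are
generated in degrees at most `δ₁`, `δ₂` respectively, then the apolar ideal of `t = f₁ f₂` is
generated by elements of bidegree `(δ, 0)` with `δ ≤ δ₁` or `(0, δ)` with `δ ≤ δ₂`, i.e. by
homogeneous elements depending only on the first (resp. second) set of variables. -/
theorem apolarIdeal_mul_generated_in_low_bidegrees (m₁ m₂ d₁ d₂ δ₁ δ₂ : ℕ)
    (f₁ : MvPolynomial (Fin m₁) ℂ) (f₂ : MvPolynomial (Fin m₂) ℂ)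
    (hf₁ : f₁.IsHomogeneous d₁) (hf₂ : f₂.IsHomogeneous d₂)
    (hf₁0 : f₁ ≠ 0) (hf₂0 : f₂ ≠ 0)
    (hgen₁ : ∃ S : Set (MvPolynomial (Fin m₁) ℂ),
      (∀ g ∈ S, ∃ δ ≤ δ₁, g.IsHomogeneous δ) ∧ Ideal.span S = apolarIdeal f₁)
    (hgen₂ : ∃ S : Set (MvPolynomial (Fin m₂) ℂ),
      (∀ g ∈ S, ∃ δ ≤ δ₂, g.IsHomogeneous δ) ∧ Ideal.span S = apolarIdeal f₂) :
    ∃ S : Set (MvPolynomial (Fin m₁ ⊕ Fin m₂) ℂ),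
      (∀ g ∈ S,
        (∃ δ ≤ δ₁, ∃ g₁ : MvPolynomial (Fin m₁) ℂ, g₁.IsHomogeneous δ ∧ g = rename Sum.inl g₁) ∨
        (∃ δ ≤ δ₂, ∃ g₂ : MvPolynomial (Fin m₂) ℂ, g₂.IsHomogeneous δ ∧ g = rename Sum.inr g₂)) ∧
      Ideal.span S = apolarIdeal (rename Sum.inl f₁ * rename Sum.inr f₂) := by
  obtain ⟨S₁, hS₁d, hS₁⟩ := hgen₁
  obtain ⟨S₂, hS₂d, hS₂⟩ := hgen₂
  refine ⟨(rename Sum.inl '' S₁) ∪ (rename Sum.inr '' S₂), ?_, ?_⟩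
  · rintro g (⟨g₁, hg₁, rfl⟩ | ⟨g₂, hg₂, rfl⟩)
    · obtain ⟨δ, hδ, hh⟩ := hS₁d g₁ hg₁
      exact Or.inl ⟨δ, hδ, g₁, hh, rfl⟩
    · obtain ⟨δ, hδ, hh⟩ := hS₂d g₂ hg₂
      exact Or.inr ⟨δ, hδ, g₂, hh, rfl⟩
  · -- easy inclusion
    have hle : Ideal.span ((rename Sum.inl '' S₁) ∪ (rename Sum.inr '' S₂))
        ≤ apolarIdeal (rename Sum.inl f₁ * rename Sum.inr f₂) := by
      rw [Ideal.span_le]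
      rintro g (⟨g₁, hg₁, rfl⟩ | ⟨g₂, hg₂, rfl⟩)
      · have h1 : g₁ ∈ apolarIdeal f₁ := hS₁ ▸ Ideal.subset_span hg₁
        rw [mem_apolarIdeal_iff] at h1
        show _ ∈ apolarIdeal _
        rw [mem_apolarIdeal_iff, diffHom_rename_inl, h1, map_zero, zero_mul]
      · have h2 : g₂ ∈ apolarIdeal f₂ := hS₂ ▸ Ideal.subset_span hg₂
        rw [mem_apolarIdeal_iff] at h2
        show _ ∈ apolarIdeal _
        rw [mem_apolarIdeal_iff, diffHom_rename_inr, h2, map_zero, mul_zero]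
    refine le_antisymm hle ?_
    intro D hD
    classical
    rw [mem_apolarIdeal_iff] at hD
    -- membership helpers
    have memJ₁ : ∀ g : MvPolynomial (Fin m₁) ℂ, g ∈ apolarIdeal f₁ →
        rename Sum.inl g ∈ Ideal.span ((rename Sum.inl '' S₁) ∪ (rename Sum.inr '' S₂)) := by
      intro g hg
      have h1 : rename Sum.inl g ∈ Ideal.map (rename Sum.inl : MvPolynomial (Fin m₁) ℂ →ₐ[ℂ] MvPolynomial (Fin m₁ ⊕ Fin m₂) ℂ)
          (apolarIdeal f₁) := Ideal.mem_map_of_mem _ hg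
      rw [← hS₁, Ideal.map_span] at h1
      exact Ideal.span_mono Set.subset_union_left h1
    have memJ₂ : ∀ g : MvPolynomial (Fin m₂) ℂ, g ∈ apolarIdeal f₂ →
        rename Sum.inr g ∈ Ideal.span ((rename Sum.inl '' S₁) ∪ (rename Sum.inr '' S₂)) := by
      intro g hg
      have h1 : rename Sum.inr g ∈ Ideal.map (rename Sum.inr : MvPolynomial (Fin m₂) ℂ →ₐ[ℂ] MvPolynomial (Fin m₁ ⊕ Fin m₂) ℂ)
          (apolarIdeal f₂) := Ideal.mem_map_of_mem _ hg
      rw [← hS₂, Ideal.map_span] at h1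
      exact Ideal.span_mono Set.subset_union_right h1
    -- setup
    set P := sumToIter ℂ (Fin m₁) (Fin m₂) D with hPdef
    set I₂' : Submodule ℂ (MvPolynomial (Fin m₂) ℂ) := (apolarIdeal f₂).restrictScalars ℂ with hI₂'
    set W : Submodule ℂ (MvPolynomial (Fin m₂) ℂ ⧸ I₂') :=
      Submodule.span ℂ (↑(P.support.image fun a => I₂'.mkQ (coeff a P))) with hW
    haveI : FiniteDimensional ℂ W := FiniteDimensional.span_of_finite ℂ (Finset.finite_toSet _)
    set n := Module.finrank ℂ W with hn
    haveI : Module.Finite ℂ W := inferInstance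
    haveI : Module.Free ℂ W := Module.Free.of_divisionRing ℂ W
    let b : Module.Basis (Fin n) ℂ W := Module.finBasis ℂ W
    choose e he using fun j : Fin n => I₂'.mkQ_surjective (b j : MvPolynomial (Fin m₂) ℂ ⧸ I₂')
    have hmem : ∀ a, I₂'.mkQ (coeff a P) ∈ W := by
      intro a
      by_cases ha : a ∈ P.support
      · exact Submodule.subset_span (Finset.mem_coe.mpr (Finset.mem_image_of_mem _ ha))
      · rw [notMem_support_iff] at ha
        rw [ha, map_zero]
        exact W.zero_mem
    set c : (Fin m₁ →₀ ℕ) → Fin n → ℂ := fun a j => b.repr ⟨_, hmem a⟩ j with hc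
    have hrepr : ∀ a, I₂'.mkQ (coeff a P)
        = ∑ j, c a j • ((b j : W) : MvPolynomial (Fin m₂) ℂ ⧸ I₂') := by
      intro a
      have h2 := congrArg W.subtype (b.sum_repr ⟨_, hmem a⟩).symm
      simp only [map_sum, map_smul, Submodule.subtype_apply] at h2
      exact h2
    have hker : ∀ a, coeff a P - ∑ j, c a j • e j ∈ apolarIdeal f₂ := by
      intro a
      have h0 : I₂'.mkQ (coeff a P - ∑ j, c a j • e j) = 0 := by
        rw [map_sub, map_sum, hrepr a, sub_eq_zero]
        exact Finset.sum_congr rfl fun j _ => by rw [map_smul, he j]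
      have h1 : coeff a P - ∑ j, c a j • e j ∈ I₂' := by
        rw [← Submodule.ker_mkQ I₂']
        exact h0
      exact h1
    set g : Fin n → MvPolynomial (Fin m₁) ℂ :=
      fun j => ∑ a ∈ P.support, c a j • monomial a (1:ℂ) with hg
    have hswap : ∑ a ∈ P.support,
          rename Sum.inl (monomial a (1:ℂ)) * rename Sum.inr (∑ j, c a j • e j)
        = ∑ j, rename Sum.inl (g j) * rename Sum.inr (e j) := by
      have lhs_eq : ∀ a ∈ P.support,
          rename Sum.inl (monomial a (1:ℂ)) * rename Sum.inr (∑ j, c a j • e j)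
            = ∑ j, c a j • (rename Sum.inl (monomial a (1:ℂ)) * rename Sum.inr (e j)) := by
        intro a _
        rw [map_sum, Finset.mul_sum]
        exact Finset.sum_congr rfl fun j _ => by rw [map_smul, mul_smul_comm]
      rw [Finset.sum_congr rfl lhs_eq, Finset.sum_comm]
      refine Finset.sum_congr rfl fun j _ => ?_
      rw [hg, map_sum, Finset.sum_mul]
      exact Finset.sum_congr rfl fun a _ => by rw [map_smul, smul_mul_assoc]
    have hDsplit : D = (∑ a ∈ P.support, rename Sum.inl (monomial a (1:ℂ)) *
          rename Sum.inr (coeff a P - ∑ j, c a j • e j))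
        + ∑ j, rename Sum.inl (g j) * rename Sum.inr (e j) := by
      rw [← hswap, ← Finset.sum_add_distrib]
      have step : ∀ a ∈ P.support,
          rename Sum.inl (monomial a (1:ℂ)) * rename Sum.inr (coeff a P - ∑ j, c a j • e j)
            + rename Sum.inl (monomial a (1:ℂ)) * rename Sum.inr (∑ j, c a j • e j)
          = rename Sum.inl (monomial a (1:ℂ)) * rename Sum.inr (coeff a P) := by
        intro a _
        rw [← mul_add, ← map_add, sub_add_cancel]
      rw [Finset.sum_congr rfl step]
      exact decompose_sum m₁ m₂ D
    have hfirst : (∑ a ∈ P.support, rename Sum.inl (monomial a (1:ℂ)) *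
        rename Sum.inr (coeff a P - ∑ j, c a j • e j))
        ∈ Ideal.span ((rename Sum.inl '' S₁) ∪ (rename Sum.inr '' S₂)) :=
      Ideal.sum_mem _ fun a _ => Ideal.mul_mem_left _ _ (memJ₂ _ (hker a))
    -- the second part annihilates t
    have hPhiFirst : diffHom (Fin m₁ ⊕ Fin m₂)
        (∑ a ∈ P.support, rename Sum.inl (monomial a (1:ℂ)) *
          rename Sum.inr (coeff a P - ∑ j, c a j • e j))
        (rename Sum.inl f₁ * rename Sum.inr f₂) = 0 := hle hfirst
    have hPhi2 : diffHom (Fin m₁ ⊕ Fin m₂) (∑ j, rename Sum.inl (g j) * rename Sum.inr (e j))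
        (rename Sum.inl f₁ * rename Sum.inr f₂) = 0 := by
      have h3 := hD
      rw [hDsplit, map_add, LinearMap.add_apply, hPhiFirst, zero_add] at h3
      exact h3
    have hsum0 : ∑ j, rename Sum.inl (diffHom (Fin m₁) (g j) f₁) *
        rename Sum.inr (diffHom (Fin m₂) (e j) f₂) = 0 := by
      rw [map_sum, LinearMap.sum_apply] at hPhi2
      rw [← hPhi2]
      exact Finset.sum_congr rfl fun j _ => (diffHom_inl_mul_inr _ _ _ _).symm
    -- linear independence of the diffHom (e j) f₂
    let φ₂ : MvPolynomial (Fin m₂) ℂ →ₗ[ℂ] MvPolynomial (Fin m₂) ℂ :=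
      { toFun := fun x => diffHom (Fin m₂) x f₂,
        map_add' := fun x y => by simp,
        map_smul' := fun cc x => by simp }
    have hkerφle : LinearMap.ker φ₂ ≤ I₂' := by
      intro x hx
      exact hx
    have hlekerφ : I₂' ≤ LinearMap.ker φ₂ := by
      intro x hx
      exact hx
    let φ : (MvPolynomial (Fin m₂) ℂ ⧸ I₂') →ₗ[ℂ] MvPolynomial (Fin m₂) ℂ :=
      I₂'.liftQ φ₂ hlekerφ
    have hφe : ∀ j, φ ((b j : W) : MvPolynomial (Fin m₂) ℂ ⧸ I₂') = diffHom (Fin m₂) (e j) f₂ := by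
      intro j
      rw [← he j, Submodule.mkQ_apply, Submodule.liftQ_apply]
      rfl
    have hindep : LinearIndependent ℂ (fun j => diffHom (Fin m₂) (e j) f₂) := by
      have h1 : LinearIndependent ℂ (fun j : Fin n => ((b j : W) : MvPolynomial (Fin m₂) ℂ ⧸ I₂')) :=
        b.linearIndependent.map' W.subtype W.ker_subtype
      have h2 := h1.map' φ (Submodule.ker_liftQ_eq_bot _ _ _ hkerφle)
      have h3 : (fun j : Fin n => diffHom (Fin m₂) (e j) f₂)
          = φ ∘ (fun j : Fin n => ((b j : W) : MvPolynomial (Fin m₂) ℂ ⧸ I₂')) :=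
        funext fun j => (hφe j).symm
      rw [h3]
      exact h2
    have hg0 := eq_zero_of_sum_inl_mul_inr _ _ hindep hsum0
    have hgI : ∀ j, g j ∈ apolarIdeal f₁ := fun j => hg0 j
    rw [hDsplit]
    exact Ideal.add_mem _ hfirst
      (Ideal.sum_mem _ fun j _ => Ideal.mul_mem_right _ _ (memJ₁ _ (hgI j)))
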